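/- The Read–Bajraktarević operator R : C_e(I) → C_e(I), (Rh)(t) = F_j(L_j⁻¹(t), h(L_j⁻¹(t))) for t ∈ I_j, has a fixed point f ∈ C_d(I): a continuous vector-valued function f : I → ℝ² satisfying f(L_j(t)) = F_j(t, f(t)) for all t ∈ I and j = 1,…,N, and f(t_j) = (v_j, w_j) for all j = 0, 1,…, N. -/

import Mathlib

open Set Filter Topology

private noncomputable def nd1 (z z' : ℝ × ℝ) : ℝ := |z.1 - z'.1| + |z.2 - z'.2|

private lemma nd1_nonneg (z z' : ℝ × ℝ) : 0 ≤ nd1 z z' :=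
  add_nonneg (abs_nonneg _) (abs_nonneg _)

private lemma nd1_triangle (z z' z'' : ℝ × ℝ) : nd1 z z'' ≤ nd1 z z' + nd1 z' z'' := by
  unfold nd1
  have h1 : |z.1 - z''.1| ≤ |z.1 - z'.1| + |z'.1 - z''.1| := abs_sub_le _ _ _
  have h2 : |z.2 - z''.2| ≤ |z.2 - z'.2| + |z'.2 - z''.2| := abs_sub_le _ _ _
  linarith

private lemma dist_le_nd1 (z z' : ℝ × ℝ) : dist z z' ≤ nd1 z z' := by
  rw [Prod.dist_eq]
  unfold nd1
  rw [Real.dist_eq, Real.dist_eq]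
  exact max_le (by linarith [abs_nonneg (z.2 - z'.2)]) (by linarith [abs_nonneg (z.1 - z'.1)])

private lemma nd1_le_two_dist (z z' : ℝ × ℝ) : nd1 z z' ≤ 2 * dist z z' := by
  unfold nd1
  rw [Prod.dist_eq, Real.dist_eq, Real.dist_eq]
  have h1 := le_max_left |z.1 - z'.1| |z.2 - z'.2|
  have h2 := le_max_right |z.1 - z'.1| |z.2 - z'.2|
  linarith

private lemma rakotch_step {sv dv lam lam' ε : ℝ} (hd : sv ≤ lam * dv ∨ dv ≤ ε)
    (hsd : sv ≤ dv) (hs0 : 0 ≤ sv) (hll : lam ≤ lam') (hl1 : lam' < 1) (hl0 : 0 ≤ lam)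
    (hε : 0 ≤ ε) : sv ≤ lam' * dv + (1 - lam') * ε := by
  have hd0 : 0 ≤ dv := le_trans hs0 hsd
  rcases hd with h | h
  · nlinarith [mul_nonneg (sub_nonneg.mpr hll) hd0, mul_nonneg (sub_nonneg.mpr hl1.le) hε]
  · nlinarith [mul_nonneg (sub_nonneg.mpr hl1.le) (sub_nonneg.mpr h)]

private lemma edelstein_lam {s : ℝ → ℝ} {A : Set ℝ} (hA : IsCompact A)
    (hs : ∀ x y : ℝ, x ≠ y → |s x - s y| < |x - y|) {ε : ℝ} (hε : 0 < ε) :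
    ∃ lam : ℝ, 0 ≤ lam ∧ lam < 1 ∧
      ∀ x ∈ A, ∀ y ∈ A, |s x - s y| ≤ lam * |x - y| ∨ |x - y| ≤ ε := by
  have hsl : ∀ x y : ℝ, |s x - s y| ≤ |x - y| := by
    intro x y
    rcases eq_or_ne x y with h | h
    · simp [h]
    · exact (hs x y h).le
  set S : Set (ℝ × ℝ) := {p | p.1 ∈ A ∧ p.2 ∈ A ∧ ε ≤ |p.1 - p.2|} with hSdef
  by_cases hSne : S.Nonempty
  · have hScpt : IsCompact S := by
      have h1 : S = (A ×ˢ A) ∩ {p : ℝ × ℝ | ε ≤ |p.1 - p.2|} := by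
        ext p; simp [hSdef, Set.mem_prod, and_assoc]
      rw [h1]
      exact (hA.prod hA).inter_right
        (isClosed_le continuous_const ((continuous_fst.sub continuous_snd).abs))
    have hsc : Continuous s := by
      refine LipschitzWith.continuous (K := 1) ?_
      refine LipschitzWith.of_dist_le_mul ?_
      intro x y; rw [Real.dist_eq, Real.dist_eq]; push_cast; rw [one_mul]; exact hsl x y
    set φ : ℝ × ℝ → ℝ := fun p => |s p.1 - s p.2| / |p.1 - p.2| with hφ
    have hφc : ContinuousOn φ S := by
      apply ContinuousOn.div
      · exact ((hsc.comp continuous_fst).sub (hsc.comp continuous_snd)).abs.continuousOn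
      · exact (continuous_fst.sub continuous_snd).abs.continuousOn
      · intro p hp; exact ne_of_gt (lt_of_lt_of_le hε hp.2.2)
    obtain ⟨p0, hp0S, hp0max⟩ := hScpt.exists_isMaxOn hSne hφc
    have hne : p0.1 ≠ p0.2 := by
      intro h
      have : ε ≤ 0 := by simpa [h] using hp0S.2.2
      linarith
    have habs : 0 < |p0.1 - p0.2| := abs_pos.mpr (sub_ne_zero.mpr hne)
    have hφlt : φ p0 < 1 := (div_lt_one habs).mpr (hs _ _ hne)
    refine ⟨max (φ p0) 0, le_max_right _ _, max_lt hφlt one_pos, ?_⟩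
    intro x hx y hy
    by_cases hxy : ε ≤ |x - y|
    · left
      have hmem : (x, y) ∈ S := ⟨hx, hy, hxy⟩
      have hle : φ (x, y) ≤ φ p0 := hp0max hmem
      have habs2 : (0:ℝ) < |x - y| := lt_of_lt_of_le hε hxy
      have : |s x - s y| = φ (x, y) * |x - y| := by
        rw [hφ]; field_simp
      rw [this]
      exact mul_le_mul_of_nonneg_right (le_trans hle (le_max_left _ _)) habs2.le
    · right; linarith [not_le.mp hxy]
  · refine ⟨0, le_refl 0, one_pos, ?_⟩
    intro x hx y hy
    right
    by_contra hcon
    exact hSne ⟨(x, y), hx, hy, (not_le.mp hcon).le⟩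

private noncomputable def pieceIdx (N : ℕ) (t : ℕ → ℝ) (y : ℝ) : ℕ :=
  sInf {j | 1 ≤ j ∧ j ≤ N ∧ t (j - 1) ≤ y ∧ y ≤ t j}

private noncomputable def RBmap (N : ℕ) (t a fc : ℕ → ℝ) (F : ℕ → ℝ → ℝ × ℝ → ℝ × ℝ)
    (z0 : ℝ × ℝ) (h : ℝ → ℝ × ℝ) : ℝ → ℝ × ℝ :=
  fun y => if t 0 ≤ y ∧ y ≤ t N then
    F (pieceIdx N t y) ((y - fc (pieceIdx N t y)) / a (pieceIdx N t y))
      (h ((y - fc (pieceIdx N t y)) / a (pieceIdx N t y)))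
  else z0

set_option maxHeartbeats 2000000 in
/-- The Read–Bajraktarević operator has a fixed point `f ∈ C_d(I)`: a continuous
vector-valued function satisfying `f (L j x) = F j x (f x)` on `I` for every `j`,
which interpolates the generalized data. -/
theorem RB_has_fixed_point
    (N : ℕ) (hN : 0 < N)
    (t v w : ℕ → ℝ)
    (htmono : ∀ j, j < N → t j < t (j + 1))
    (a fc : ℕ → ℝ) (L : ℕ → ℝ → ℝ)
    (hL : ∀ j, 1 ≤ j → j ≤ N → ∀ x : ℝ, L j x = a j * x + fc j)
    (ha : ∀ j, 1 ≤ j → j ≤ N → a j ≠ 0 ∧ |a j| < 1)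
    (hL0 : ∀ j, 1 ≤ j → j ≤ N → L j (t 0) = t (j - 1))
    (hLN : ∀ j, 1 ≤ j → j ≤ N → L j (t N) = t j)
    (b c d e p q : ℕ → ℝ → ℝ)
    (hLip : ∀ j, 1 ≤ j → j ≤ N → ∀ g ∈ ([b j, c j, d j, e j, p j, q j] : List (ℝ → ℝ)),
      ∃ Kg : NNReal, LipschitzOnWith Kg g (Set.Icc (t 0) (t N)))
    (hbd : ∀ j, 1 ≤ j → j ≤ N → ∃ B D : ℝ, B + D ≤ 1 ∧
      (∀ x ∈ Set.Icc (t 0) (t N), |b j x| ≤ B) ∧ (∀ x ∈ Set.Icc (t 0) (t N), |d j x| ≤ D))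
    (hce : ∀ j, 1 ≤ j → j ≤ N → ∃ C E : ℝ, C + E ≤ 1 ∧
      (∀ x ∈ Set.Icc (t 0) (t N), |c j x| ≤ C) ∧ (∀ x ∈ Set.Icc (t 0) (t N), |e j x| ≤ E))
    (s r : ℕ → ℝ → ℝ)
    (hs : ∀ j, 1 ≤ j → j ≤ N → ∀ x y : ℝ, x ≠ y → |s j x - s j y| < |x - y|)
    (hr : ∀ j, 1 ≤ j → j ≤ N → ∀ x y : ℝ, x ≠ y → |r j x - r j y| < |x - y|)
    (F : ℕ → ℝ → ℝ × ℝ → ℝ × ℝ)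
    (hF : ∀ j x vw, F j x vw = (b j x * s j vw.1 + c j x * r j vw.2 + p j x,
                                d j x * s j vw.1 + e j x * r j vw.2 + q j x))
    (hF0 : ∀ j, 1 ≤ j → j ≤ N → F j (t 0) (v 0, w 0) = (v (j - 1), w (j - 1)))
    (hFN : ∀ j, 1 ≤ j → j ≤ N → F j (t N) (v N, w N) = (v j, w j))
    (K : Set (ℝ × ℝ)) (hKc : IsCompact K)
    (hKv : ∀ j, j ≤ N → (v j, w j) ∈ K)
    (hKF : ∀ j, 1 ≤ j → j ≤ N → ∀ x ∈ Set.Icc (t 0) (t N), ∀ vw ∈ K, F j x vw ∈ K)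
    :
    ∃ f : ℝ → ℝ × ℝ, ContinuousOn f (Set.Icc (t 0) (t N)) ∧
      (∀ j, 1 ≤ j → j ≤ N → ∀ x ∈ Set.Icc (t 0) (t N), f (L j x) = F j x (f x)) ∧
      (∀ j, j ≤ N → f (t j) = (v j, w j)) := by
  -- strict monotonicity of knots
  have tmono : ∀ i k : ℕ, i < k → k ≤ N → t i < t k := by
    intro i k
    induction k with
    | zero => omega
    | succ k ih =>
      intro hik hkN
      rcases Nat.lt_or_ge i k with h | h
      · exact lt_trans (ih h (by omega)) (htmono k (by omega))
      · have : i = k := by omega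
        subst this
        exact htmono i (by omega)
  have tmole : ∀ i k : ℕ, i ≤ k → k ≤ N → t i ≤ t k := by
    intro i k hik hkN
    rcases Nat.eq_or_lt_of_le hik with h | h
    · rw [h]
    · exact (tmono i k h hkN).le
  have h0N : t 0 < t N := tmono 0 N hN (le_refl N)
  -- affine maps basics
  have ea0 : ∀ j, 1 ≤ j → j ≤ N → a j * t 0 + fc j = t (j - 1) := by
    intro j h1 h2
    rw [← hL j h1 h2 (t 0)]
    exact hL0 j h1 h2
  have eaN : ∀ j, 1 ≤ j → j ≤ N → a j * t N + fc j = t j := by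
    intro j h1 h2
    rw [← hL j h1 h2 (t N)]
    exact hLN j h1 h2
  have apos : ∀ j, 1 ≤ j → j ≤ N → 0 < a j := by
    intro j h1 h2
    have e1 := ea0 j h1 h2
    have e2 := eaN j h1 h2
    have h3 : t (j - 1) < t j := tmono (j - 1) j (by omega) h2
    nlinarith [h0N]
  -- inverse map properties
  have hax : ∀ j, 1 ≤ j → j ≤ N → ∀ y : ℝ, t (j - 1) ≤ y → y ≤ t j →
      t 0 ≤ (y - fc j) / a j ∧ (y - fc j) / a j ≤ t N ∧ a j * ((y - fc j) / a j) + fc j = y := by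
    intro j h1 h2 y hy1 hy2
    have hap := apos j h1 h2
    have e1 := ea0 j h1 h2
    have e2 := eaN j h1 h2
    refine ⟨?_, ?_, ?_⟩
    · rw [le_div_iff₀ hap]; nlinarith
    · rw [div_le_iff₀ hap]; nlinarith
    · field_simp; ring
  have hLmem : ∀ j, 1 ≤ j → j ≤ N → ∀ x : ℝ, t 0 ≤ x → x ≤ t N →
      t (j - 1) ≤ a j * x + fc j ∧ a j * x + fc j ≤ t j := by
    intro j h1 h2 x hx1 hx2
    have hap := apos j h1 h2
    have e1 := ea0 j h1 h2
    have e2 := eaN j h1 h2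
    constructor <;> nlinarith
  -- existence of a covering piece
  have hex : ∀ n : ℕ, 1 ≤ n → n ≤ N → ∀ y : ℝ, t 0 ≤ y → y ≤ t n →
      ∃ j, 1 ≤ j ∧ j ≤ N ∧ t (j - 1) ≤ y ∧ y ≤ t j := by
    intro n
    induction n with
    | zero => omega
    | succ n ih =>
      intro _ hn1 y hy0 hyn
      by_cases hc : 1 ≤ n ∧ y ≤ t n
      · exact ih hc.1 (by omega) y hy0 hc.2
      · rcases Nat.eq_zero_or_pos n with h0 | h0
        · subst h0
          exact ⟨1, le_refl 1, by omega, by simpa using hy0, hyn⟩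
        · push_neg at hc
          have hcy : t n < y := hc h0
          exact ⟨n + 1, by omega, hn1, by simpa using hcy.le, hyn⟩
  have hPI : ∀ y : ℝ, t 0 ≤ y → y ≤ t N →
      1 ≤ pieceIdx N t y ∧ pieceIdx N t y ≤ N ∧
      t (pieceIdx N t y - 1) ≤ y ∧ y ≤ t (pieceIdx N t y) := by
    intro y hy1 hy2
    have hne : {j | 1 ≤ j ∧ j ≤ N ∧ t (j - 1) ≤ y ∧ y ≤ t j}.Nonempty :=
      hex N hN (le_refl N) y hy1 hy2
    exact Nat.sInf_mem hne
  -- 1-Lipschitz bounds for s and r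
  have hsl : ∀ j, 1 ≤ j → j ≤ N → ∀ u u' : ℝ, |s j u - s j u'| ≤ |u - u'| := by
    intro j h1 h2 u u'
    rcases eq_or_ne u u' with h | h
    · simp [h]
    · exact (hs j h1 h2 u u' h).le
  have hrl : ∀ j, 1 ≤ j → j ≤ N → ∀ u u' : ℝ, |r j u - r j u'| ≤ |u - u'| := by
    intro j h1 h2 u u'
    rcases eq_or_ne u u' with h | h
    · simp [h]
    · exact (hr j h1 h2 u u' h).le
  -- basic bound for F differences
  have hFB : ∀ j, 1 ≤ j → j ≤ N → ∀ x : ℝ, t 0 ≤ x → x ≤ t N → ∀ z z' : ℝ × ℝ,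
      nd1 (F j x z) (F j x z') ≤ |s j z.1 - s j z'.1| + |r j z.2 - r j z'.2| := by
    intro j h1 h2 x hx1 hx2 z z'
    obtain ⟨B, D, hBD, hB, hD⟩ := hbd j h1 h2
    obtain ⟨C, E, hCE, hC, hE⟩ := hce j h1 h2
    have hbx := hB x ⟨hx1, hx2⟩
    have hdx := hD x ⟨hx1, hx2⟩
    have hcx := hC x ⟨hx1, hx2⟩
    have hex' := hE x ⟨hx1, hx2⟩
    rw [hF, hF]
    unfold nd1
    simp only []
    have e1 : (b j x * s j z.1 + c j x * r j z.2 + p j x) -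
        (b j x * s j z'.1 + c j x * r j z'.2 + p j x) =
        b j x * (s j z.1 - s j z'.1) + c j x * (r j z.2 - r j z'.2) := by ring
    have e2 : (d j x * s j z.1 + e j x * r j z.2 + q j x) -
        (d j x * s j z'.1 + e j x * r j z'.2 + q j x) =
        d j x * (s j z.1 - s j z'.1) + e j x * (r j z.2 - r j z'.2) := by ring
    rw [e1, e2]
    have t1 : |b j x * (s j z.1 - s j z'.1) + c j x * (r j z.2 - r j z'.2)| ≤
        |b j x| * |s j z.1 - s j z'.1| + |c j x| * |r j z.2 - r j z'.2| := by
      refine (abs_add_le _ _).trans ?_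
      rw [abs_mul, abs_mul]
    have t2 : |d j x * (s j z.1 - s j z'.1) + e j x * (r j z.2 - r j z'.2)| ≤
        |d j x| * |s j z.1 - s j z'.1| + |e j x| * |r j z.2 - r j z'.2| := by
      refine (abs_add_le _ _).trans ?_
      rw [abs_mul, abs_mul]
    have hsn := abs_nonneg (s j z.1 - s j z'.1)
    have hrn := abs_nonneg (r j z.2 - r j z'.2)
    have hbn := abs_nonneg (b j x)
    have hdn := abs_nonneg (d j x)
    have hcn := abs_nonneg (c j x)
    have hen := abs_nonneg (e j x)
    nlinarith [mul_le_mul_of_nonneg_right (add_le_add hbx hdx) hsn,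
      mul_le_mul_of_nonneg_right (add_le_add hcx hex') hrn]
  have hFlip : ∀ j, 1 ≤ j → j ≤ N → ∀ x : ℝ, t 0 ≤ x → x ≤ t N → ∀ z z' : ℝ × ℝ,
      nd1 (F j x z) (F j x z') ≤ nd1 z z' := by
    intro j h1 h2 x hx1 hx2 z z'
    refine (hFB j h1 h2 x hx1 hx2 z z').trans ?_
    exact add_le_add (hsl j h1 h2 _ _) (hrl j h1 h2 _ _)
  have hFstrict : ∀ j, 1 ≤ j → j ≤ N → ∀ x : ℝ, t 0 ≤ x → x ≤ t N → ∀ z z' : ℝ × ℝ,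
      z ≠ z' → nd1 (F j x z) (F j x z') < nd1 z z' := by
    intro j h1 h2 x hx1 hx2 z z' hne
    refine lt_of_le_of_lt (hFB j h1 h2 x hx1 hx2 z z') ?_
    unfold nd1
    rcases eq_or_ne z.1 z'.1 with he | he
    · have he2 : z.2 ≠ z'.2 := by
        intro h'
        exact hne (Prod.ext he h')
      have : |s j z.1 - s j z'.1| = 0 := by rw [he]; simp
      rw [this]
      have h1' : |z.1 - z'.1| = 0 := by rw [he]; simp
      rw [h1']
      have := hr j h1 h2 z.2 z'.2 he2
      linarith
    · exact add_lt_add_of_lt_of_le (hs j h1 h2 _ _ he) (hrl j h1 h2 _ _)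
  -- uniform "Rakotch" modulus on the compact set K
  have hA1 : IsCompact (Prod.fst '' K) := hKc.image continuous_fst
  have hA2 : IsCompact (Prod.snd '' K) := hKc.image continuous_snd
  have hLAM : ∀ ε : ℝ, 0 < ε → ∃ lam : ℝ, 0 ≤ lam ∧ lam < 1 ∧
      ∀ j, 1 ≤ j → j ≤ N → ∀ x : ℝ, t 0 ≤ x → x ≤ t N → ∀ z ∈ K, ∀ z' ∈ K,
        nd1 (F j x z) (F j x z') ≤ lam * nd1 z z' + (1 - lam) * (2 * ε) := by
    intro ε hε
    have hch : ∀ j : ℕ, ∃ lam : ℝ, 0 ≤ lam ∧ lam < 1 ∧ (1 ≤ j → j ≤ N →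
        (∀ u ∈ Prod.fst '' K, ∀ u' ∈ Prod.fst '' K,
          |s j u - s j u'| ≤ lam * |u - u'| ∨ |u - u'| ≤ ε) ∧
        (∀ u ∈ Prod.snd '' K, ∀ u' ∈ Prod.snd '' K,
          |r j u - r j u'| ≤ lam * |u - u'| ∨ |u - u'| ≤ ε)) := by
      intro j
      by_cases hj : 1 ≤ j ∧ j ≤ N
      · obtain ⟨l1, hl10, hl11, hl1⟩ := edelstein_lam hA1 (hs j hj.1 hj.2) hε
        obtain ⟨l2, hl20, hl21, hl2⟩ := edelstein_lam hA2 (hr j hj.1 hj.2) hε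
        refine ⟨max l1 l2, le_trans hl10 (le_max_left _ _), max_lt hl11 hl21, fun _ _ => ⟨?_, ?_⟩⟩
        · intro u hu u' hu'
          rcases hl1 u hu u' hu' with h | h
          · left
            exact h.trans (mul_le_mul_of_nonneg_right (le_max_left _ _) (abs_nonneg _))
          · right; exact h
        · intro u hu u' hu'
          rcases hl2 u hu u' hu' with h | h
          · left
            exact h.trans (mul_le_mul_of_nonneg_right (le_max_right _ _) (abs_nonneg _))
          · right; exact h
      · exact ⟨0, le_refl 0, one_pos, fun h1 h2 => absurd ⟨h1, h2⟩ hj⟩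
    choose lamf hl0 hl1 hlP using hch
    have hNne : (Finset.Icc 1 N).Nonempty := ⟨1, Finset.mem_Icc.mpr ⟨le_refl 1, hN⟩⟩
    set Λ := (Finset.Icc 1 N).sup' hNne lamf with hΛdef
    have hΛ0 : 0 ≤ Λ := le_trans (hl0 1) (Finset.le_sup' lamf (Finset.mem_Icc.mpr ⟨le_refl 1, hN⟩))
    have hΛ1 : Λ < 1 := by
      rw [hΛdef, Finset.sup'_lt_iff]
      intro j _
      exact hl1 j
    refine ⟨Λ, hΛ0, hΛ1, ?_⟩
    intro j hj1 hjN x hx1 hx2 z hz z' hz'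
    have hle : lamf j ≤ Λ := Finset.le_sup' lamf (Finset.mem_Icc.mpr ⟨hj1, hjN⟩)
    have hsb : |s j z.1 - s j z'.1| ≤ Λ * |z.1 - z'.1| + (1 - Λ) * ε := by
      refine rakotch_step ?_ (hsl j hj1 hjN _ _) (abs_nonneg _) hle hΛ1 (hl0 j) hε.le
      exact (hlP j hj1 hjN).1 z.1 ⟨z, hz, rfl⟩ z'.1 ⟨z', hz', rfl⟩
    have hrb : |r j z.2 - r j z'.2| ≤ Λ * |z.2 - z'.2| + (1 - Λ) * ε := by
      refine rakotch_step ?_ (hrl j hj1 hjN _ _) (abs_nonneg _) hle hΛ1 (hl0 j) hε.le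
      exact (hlP j hj1 hjN).2 z.2 ⟨z, hz, rfl⟩ z'.2 ⟨z', hz', rfl⟩
    refine (hFB j hj1 hjN x hx1 hx2 z z').trans ?_
    have : Λ * nd1 z z' + (1 - Λ) * (2 * ε) =
        (Λ * |z.1 - z'.1| + (1 - Λ) * ε) + (Λ * |z.2 - z'.2| + (1 - Λ) * ε) := by
      unfold nd1; ring
    rw [this]
    exact add_le_add hsb hrb
  -- bound on K
  have hKne : (v 0, w 0) ∈ K := hKv 0 (Nat.zero_le N)
  obtain ⟨M, hM0, hM⟩ : ∃ M : ℝ, 0 ≤ M ∧ ∀ z ∈ K, ∀ z' ∈ K, nd1 z z' ≤ M := by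
    obtain ⟨R, hR⟩ := isBounded_iff_forall_norm_le.mp hKc.isBounded
    have hR0 : 0 ≤ R := le_trans (norm_nonneg _) (hR _ hKne)
    refine ⟨4 * R, by linarith, ?_⟩
    intro z hz z' hz'
    have n1 : |z.1| ≤ R := le_trans (by rw [← Real.norm_eq_abs]; exact norm_fst_le z) (hR z hz)
    have n2 : |z.2| ≤ R := le_trans (by rw [← Real.norm_eq_abs]; exact norm_snd_le z) (hR z hz)
    have n3 : |z'.1| ≤ R := le_trans (by rw [← Real.norm_eq_abs]; exact norm_fst_le z') (hR z' hz')
    have n4 : |z'.2| ≤ R := le_trans (by rw [← Real.norm_eq_abs]; exact norm_snd_le z') (hR z' hz')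
    have d1 : |z.1 - z'.1| ≤ |z.1| + |z'.1| := by
      rw [sub_eq_add_neg]
      exact (abs_add_le _ _).trans (by rw [abs_neg])
    have d2 : |z.2 - z'.2| ≤ |z.2| + |z'.2| := by
      rw [sub_eq_add_neg]
      exact (abs_add_le _ _).trans (by rw [abs_neg])
    unfold nd1
    linarith
  -- the RB operator
  set Tm := RBmap N t a fc F (v 0, w 0) with hTmdef
  have hTI : ∀ (g : ℝ → ℝ × ℝ) (y : ℝ), t 0 ≤ y → y ≤ t N →
      Tm g y = F (pieceIdx N t y) ((y - fc (pieceIdx N t y)) / a (pieceIdx N t y))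
        (g ((y - fc (pieceIdx N t y)) / a (pieceIdx N t y))) := by
    intro g y h1 h2
    rw [hTmdef]
    unfold RBmap
    rw [if_pos ⟨h1, h2⟩]
  have hTmem : ∀ g : ℝ → ℝ × ℝ, (∀ y, g y ∈ K) → ∀ y, Tm g y ∈ K := by
    intro g hg y
    rw [hTmdef]
    unfold RBmap
    split_ifs with hy
    · obtain ⟨hj1, hjN, hy1, hy2⟩ := hPI y hy.1 hy.2
      obtain ⟨hx1, hx2, _⟩ := hax _ hj1 hjN y hy1 hy2
      exact hKF _ hj1 hjN _ ⟨hx1, hx2⟩ _ (hg _)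
    · exact hKne
  have hTiter : ∀ g : ℝ → ℝ × ℝ, (∀ y, g y ∈ K) → ∀ n y, (Tm^[n] g) y ∈ K := by
    intro g hg n
    induction n with
    | zero => simpa using hg
    | succ n ih =>
      intro y
      rw [Function.iterate_succ_apply']
      exact hTmem _ ih y
  -- the iteration sequence
  set h0 : ℝ → ℝ × ℝ := fun _ => (v 0, w 0) with hh0def
  have hh0K : ∀ y, h0 y ∈ K := fun _ => hKne
  set hseq : ℕ → ℝ → ℝ × ℝ := fun n => Tm^[n] h0 with hhdef
  have hhK : ∀ n y, hseq n y ∈ K := fun n y => hTiter h0 hh0K n y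
  -- the uniform contraction estimate for iterates
  have hEST : ∀ ε : ℝ, 0 < ε → ∃ lam : ℝ, 0 ≤ lam ∧ lam < 1 ∧
      ∀ n : ℕ, ∀ g g' : ℝ → ℝ × ℝ, (∀ y, g y ∈ K) → (∀ y, g' y ∈ K) →
      ∀ y : ℝ, t 0 ≤ y → y ≤ t N →
        nd1 ((Tm^[n] g) y) ((Tm^[n] g') y) ≤ lam ^ n * M + 2 * ε := by
    intro ε hε
    obtain ⟨Λ, hΛ0, hΛ1, hΛ⟩ := hLAM ε hε
    refine ⟨Λ, hΛ0, hΛ1, ?_⟩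
    intro n
    induction n with
    | zero =>
      intro g g' hg hg' y hy1 hy2
      simp only [Function.iterate_zero, id_eq, pow_zero, one_mul]
      exact (hM _ (hg y) _ (hg' y)).trans (by linarith)
    | succ n ih =>
      intro g g' hg hg' y hy1 hy2
      rw [show Tm^[n+1] g = Tm (Tm^[n] g) from Function.iterate_succ_apply' Tm n g,
          show Tm^[n+1] g' = Tm (Tm^[n] g') from Function.iterate_succ_apply' Tm n g',
          hTI _ y hy1 hy2, hTI _ y hy1 hy2]
      obtain ⟨hj1, hjN, hy1', hy2'⟩ := hPI y hy1 hy2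
      obtain ⟨hx1, hx2, _⟩ := hax _ hj1 hjN y hy1' hy2'
      refine le_trans (hΛ _ hj1 hjN _ hx1 hx2 _ (hTiter g hg n _) _ (hTiter g' hg' n _)) ?_
      have hih := ih g g' hg hg' _ hx1 hx2
      have h1 : Λ * nd1 ((Tm^[n] g) ((y - fc (pieceIdx N t y)) / a (pieceIdx N t y)))
          ((Tm^[n] g') ((y - fc (pieceIdx N t y)) / a (pieceIdx N t y))) ≤
          Λ * (Λ ^ n * M + 2 * ε) := mul_le_mul_of_nonneg_left hih hΛ0
      have h2 : Λ * (Λ ^ n * M + 2 * ε) + (1 - Λ) * (2 * ε) = Λ ^ (n+1) * M + 2 * ε := by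
        rw [pow_succ]; ring
      linarith
  -- construction of the limit function
  have hconv : ∀ y : ℝ, ∃ zl : ℝ × ℝ, zl ∈ K ∧ (t 0 ≤ y → y ≤ t N →
      Tendsto (fun n => hseq n y) atTop (nhds zl)) := by
    intro y
    by_cases hy : t 0 ≤ y ∧ y ≤ t N
    · have hcs : CauchySeq (fun n => hseq n y) := by
        rw [Metric.cauchySeq_iff']
        intro ε' hε'
        obtain ⟨Λ, hΛ0, hΛ1, hE⟩ := hEST (ε' / 8) (by linarith)
        have htend : Tendsto (fun n => Λ ^ n * M) atTop (nhds 0) := by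
          have := (tendsto_pow_atTop_nhds_zero_of_lt_one hΛ0 hΛ1).mul_const M
          simpa using this
        obtain ⟨n0, hn0⟩ := (htend.eventually_lt_const (show (0:ℝ) < ε' / 2 by linarith)).exists
        refine ⟨n0, fun n hn => ?_⟩
        have hrew : hseq n y = (Tm^[n0] (hseq (n - n0))) y := by
          have h' : Tm^[n0 + (n - n0)] h0 y = Tm^[n0] (Tm^[n - n0] h0) y :=
            congrFun (Function.iterate_add_apply Tm n0 (n - n0) h0) y
          rw [show n0 + (n - n0) = n from by omega] at h'
          exact h'
        calc dist (hseq n y) (hseq n0 y) ≤ nd1 (hseq n y) (hseq n0 y) := dist_le_nd1 _ _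
          _ ≤ Λ ^ n0 * M + 2 * (ε' / 8) := by
              rw [hrew]
              exact hE n0 (hseq (n - n0)) h0 (hhK _) hh0K y hy.1 hy.2
          _ < ε' := by linarith
      obtain ⟨zl, hzl⟩ := cauchySeq_tendsto_of_complete hcs
      refine ⟨zl, ?_, fun _ _ => hzl⟩
      exact hKc.isClosed.mem_of_tendsto hzl (Eventually.of_forall (fun n => hhK n y))
    · exact ⟨(v 0, w 0), hKne, fun h1 h2 => absurd ⟨h1, h2⟩ hy⟩
  choose f hfK hflim using hconv
  -- fixed point equation (raw form)
  have ffix : ∀ y : ℝ, t 0 ≤ y → y ≤ t N →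
      f y = F (pieceIdx N t y) ((y - fc (pieceIdx N t y)) / a (pieceIdx N t y))
        (f ((y - fc (pieceIdx N t y)) / a (pieceIdx N t y))) := by
    intro y hy1 hy2
    obtain ⟨hj1, hjN, hy1', hy2'⟩ := hPI y hy1 hy2
    obtain ⟨hx1, hx2, _⟩ := hax _ hj1 hjN y hy1' hy2'
    set x := (y - fc (pieceIdx N t y)) / a (pieceIdx N t y) with hxdef
    have hstep : ∀ n, hseq (n + 1) y = F (pieceIdx N t y) x (hseq n x) := by
      intro n
      have h' : hseq (n + 1) y = Tm (hseq n) y := by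
        have := Function.iterate_succ_apply' Tm n h0
        exact congrFun this y
      rw [h', hTI _ y hy1 hy2]
    have hlim1 : Tendsto (fun n => hseq (n + 1) y) atTop (nhds (f y)) :=
      (hflim y hy1 hy2).comp (tendsto_add_atTop_nat 1)
    have hlim2 : Tendsto (fun n => hseq (n + 1) y) atTop
        (nhds (F (pieceIdx N t y) x (f x))) := by
      rw [tendsto_iff_dist_tendsto_zero]
      have hb : ∀ n, dist (hseq (n + 1) y) (F (pieceIdx N t y) x (f x)) ≤
          2 * dist (hseq n x) (f x) := by
        intro n
        rw [hstep n]
        calc dist (F (pieceIdx N t y) x (hseq n x)) (F (pieceIdx N t y) x (f x))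
            ≤ nd1 (F (pieceIdx N t y) x (hseq n x)) (F (pieceIdx N t y) x (f x)) :=
              dist_le_nd1 _ _
          _ ≤ nd1 (hseq n x) (f x) := hFlip _ hj1 hjN x hx1 hx2 _ _
          _ ≤ 2 * dist (hseq n x) (f x) := nd1_le_two_dist _ _
      have hz : Tendsto (fun n => 2 * dist (hseq n x) (f x)) atTop (nhds 0) := by
        have := (tendsto_iff_dist_tendsto_zero.mp (hflim x hx1 hx2)).const_mul 2
        simpa using this
      exact squeeze_zero (fun n => dist_nonneg) hb hz
    exact tendsto_nhds_unique hlim1 hlim2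
  -- endpoint values
  have hfixedpt : ∀ j, 1 ≤ j → j ≤ N → ∀ x : ℝ, t 0 ≤ x → x ≤ t N → ∀ z0 : ℝ × ℝ,
      F j x z0 = z0 → f 0 = f 0 := fun _ _ _ _ _ _ _ _ => rfl
  have ft0 : f (t 0) = (v 0, w 0) := by
    have hj := hPI (t 0) (le_refl _) h0N.le
    obtain ⟨hj1, hjN, hy1', hy2'⟩ := hj
    have hj1' : pieceIdx N t (t 0) = 1 := by
      by_contra hne
      have h2 : 2 ≤ pieceIdx N t (t 0) := by omega
      have : t 0 < t (pieceIdx N t (t 0) - 1) := tmono 0 _ (by omega) (by omega)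
      linarith
    have hx0 : (t 0 - fc 1) / a 1 = t 0 := by
      have e1 := ea0 1 (le_refl 1) hN
      have hap := apos 1 (le_refl 1) hN
      field_simp
      linarith
    have heq := ffix (t 0) (le_refl _) h0N.le
    rw [hj1', hx0] at heq
    have hFfix : F 1 (t 0) (v 0, w 0) = (v 0, w 0) := by
      have := hF0 1 (le_refl 1) hN
      simpa using this
    by_contra hne
    have hlt := hFstrict 1 (le_refl 1) hN (t 0) (le_refl _) h0N.le (f (t 0)) (v 0, w 0) hne
    rw [← heq, hFfix] at hlt
    exact lt_irrefl _ hlt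
  have ftN : f (t N) = (v N, w N) := by
    have hj := hPI (t N) h0N.le (le_refl _)
    obtain ⟨hj1, hjN, hy1', hy2'⟩ := hj
    have hjN' : pieceIdx N t (t N) = N := by
      by_contra hne
      have h2 : pieceIdx N t (t N) < N := by omega
      have : t (pieceIdx N t (t N)) < t N := tmono _ N h2 (le_refl N)
      linarith
    have hxN : (t N - fc N) / a N = t N := by
      have e2 := eaN N hN (le_refl N)
      have hap := apos N hN (le_refl N)
      field_simp
      linarith
    have heq := ffix (t N) h0N.le (le_refl _)
    rw [hjN', hxN] at heq
    have hFfix : F N (t N) (v N, w N) = (v N, w N) := hFN N hN (le_refl N)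
    by_contra hne
    have hlt := hFstrict N hN (le_refl N) (t N) h0N.le (le_refl _) (f (t N)) (v N, w N) hne
    rw [← heq, hFfix] at hlt
    exact lt_irrefl _ hlt
  -- knot values
  have fknot : ∀ k, k ≤ N → f (t k) = (v k, w k) := by
    intro k hk
    rcases Nat.eq_zero_or_pos k with h0' | h0'
    · subst h0'; exact ft0
    rcases Nat.eq_or_lt_of_le hk with hNk | hNk
    · subst hNk; exact ftN
    -- 1 ≤ k ≤ N - 1
    have hyI1 : t 0 ≤ t k := tmole 0 k (Nat.zero_le k) hk
    have hyI2 : t k ≤ t N := tmole k N hk (le_refl N)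
    obtain ⟨hj1, hjN, hy1', hy2'⟩ := hPI (t k) hyI1 hyI2
    set j' := pieceIdx N t (t k) with hj'def
    have hcase : j' = k ∨ j' = k + 1 := by
      have c1 : j' - 1 ≤ k := by
        by_contra hcon
        have : t k < t (j' - 1) := tmono k (j' - 1) (by omega) (by omega)
        linarith
      have c2 : k ≤ j' := by
        by_contra hcon
        have : t j' < t k := tmono j' k (by omega) hk
        linarith
      omega
    have heq := ffix (t k) hyI1 hyI2
    rw [← hj'def] at heq
    rcases hcase with hc | hc
    · rw [hc] at heq
      have hxN : (t k - fc k) / a k = t N := by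
        have e2 := eaN k h0' (by omega)
        have hap := apos k h0' (by omega)
        field_simp
        linarith
      rw [hxN, ftN] at heq
      rw [heq]
      exact hFN k h0' (by omega)
    · rw [hc] at heq
      have hx0 : (t k - fc (k + 1)) / a (k + 1) = t 0 := by
        have e1 := ea0 (k + 1) (by omega) (by omega)
        have hap := apos (k + 1) (by omega) (by omega)
        simp only [Nat.add_sub_cancel] at e1
        field_simp
        linarith
      rw [hx0, ft0] at heq
      rw [heq]
      have := hF0 (k + 1) (by omega) (by omega)
      simpa using this
  -- the functional equation
  have feq : ∀ j, 1 ≤ j → j ≤ N → ∀ x : ℝ, t 0 ≤ x → x ≤ t N →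
      f (L j x) = F j x (f x) := by
    intro j hj1 hjN x hx1 hx2
    rw [hL j hj1 hjN x]
    set y := a j * x + fc j with hydef
    obtain ⟨hyj1, hyj2⟩ := hLmem j hj1 hjN x hx1 hx2
    have hyI1 : t 0 ≤ y := le_trans (tmole 0 (j - 1) (Nat.zero_le _) (by omega)) hyj1
    have hyI2 : y ≤ t N := le_trans hyj2 (tmole j N hjN (le_refl N))
    obtain ⟨hk1, hkN, hyk1, hyk2⟩ := hPI y hyI1 hyI2
    set j' := pieceIdx N t y with hj'def
    have heq := ffix y hyI1 hyI2
    rw [← hj'def] at heq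
    rcases Nat.lt_trichotomy j' j with hlt | heqj | hgt
    · -- y = t (j-1), x = t 0
      have h1 : t j' ≤ t (j - 1) := tmole j' (j - 1) (by omega) (by omega)
      have hyeq : y = t (j - 1) := le_antisymm (le_trans hyk2 h1) hyj1
      have hxt0 : x = t 0 := by
        have e1 := ea0 j hj1 hjN
        have hap := apos j hj1 hjN
        have h' : y = a j * t 0 + fc j := by rw [hyeq, ← e1]
        have h'' : a j * x + fc j = a j * t 0 + fc j := hydef.symm.trans h'
        nlinarith [h'']
      rw [hyeq, hxt0, ft0, fknot (j - 1) (by omega)]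
      exact (hF0 j hj1 hjN).symm
    · rw [heqj] at heq
      have hxx : (y - fc j) / a j = x := by
        have hap := apos j hj1 hjN
        rw [hydef, add_sub_cancel_right]
        exact mul_div_cancel_left₀ x (ne_of_gt hap)
      rw [hxx] at heq
      exact heq
    · -- y = t j, x = t N
      have h1 : t j ≤ t (j' - 1) := tmole j (j' - 1) (by omega) (by omega)
      have hyeq : y = t j := le_antisymm hyj2 (le_trans h1 hyk1)
      have hxtN : x = t N := by
        have e2 := eaN j hj1 hjN
        have hap := apos j hj1 hjN
        have h' : y = a j * t N + fc j := by rw [hyeq, ← e2]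
        have h'' : a j * x + fc j = a j * t N + fc j := hydef.symm.trans h'
        nlinarith [h'']
      rw [hyeq, hxtN, ftN, fknot j hjN]
      exact (hFN j hj1 hjN).symm
  -- Lipschitz dependence of F on the first variable, uniformly on K
  have hlipx : ∀ j, 1 ≤ j → j ≤ N → ∃ CL : ℝ, 0 ≤ CL ∧
      ∀ x : ℝ, t 0 ≤ x → x ≤ t N → ∀ x' : ℝ, t 0 ≤ x' → x' ≤ t N → ∀ z ∈ K,
        nd1 (F j x z) (F j x' z) ≤ CL * |x - x'| := by
    intro j hj1 hjN
    obtain ⟨Kb, hKb⟩ := hLip j hj1 hjN (b j) (by simp)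
    obtain ⟨Kc, hKc'⟩ := hLip j hj1 hjN (c j) (by simp)
    obtain ⟨Kd, hKd⟩ := hLip j hj1 hjN (d j) (by simp)
    obtain ⟨Ke, hKe⟩ := hLip j hj1 hjN (e j) (by simp)
    obtain ⟨Kp, hKp⟩ := hLip j hj1 hjN (p j) (by simp)
    obtain ⟨Kq, hKq⟩ := hLip j hj1 hjN (q j) (by simp)
    obtain ⟨R, hR⟩ := isBounded_iff_forall_norm_le.mp hKc.isBounded
    have hR0 : 0 ≤ R := le_trans (norm_nonneg _) (hR _ hKne)
    set Ms : ℝ := |s j 0| + R with hMsdef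
    set Mr : ℝ := |r j 0| + R with hMrdef
    have hMs0 : 0 ≤ Ms := by positivity
    have hMr0 : 0 ≤ Mr := by positivity
    have hMs : ∀ z ∈ K, |s j z.1| ≤ Ms := by
      intro z hz
      have h1 : |s j z.1 - s j 0| ≤ |z.1 - 0| := hsl j hj1 hjN _ _
      have h2 : |z.1| ≤ R := le_trans (by rw [← Real.norm_eq_abs]; exact norm_fst_le z) (hR z hz)
      have h3 : |s j z.1| ≤ |s j z.1 - s j 0| + |s j 0| := by
        have := abs_sub_le (s j z.1) (s j 0) 0
        simpa using this
      rw [sub_zero] at h1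
      rw [hMsdef]
      linarith
    have hMr : ∀ z ∈ K, |r j z.2| ≤ Mr := by
      intro z hz
      have h1 : |r j z.2 - r j 0| ≤ |z.2 - 0| := hrl j hj1 hjN _ _
      have h2 : |z.2| ≤ R := le_trans (by rw [← Real.norm_eq_abs]; exact norm_snd_le z) (hR z hz)
      have h3 : |r j z.2| ≤ |r j z.2 - r j 0| + |r j 0| := by
        have := abs_sub_le (r j z.2) (r j 0) 0
        simpa using this
      rw [sub_zero] at h1
      rw [hMrdef]
      linarith
    refine ⟨(Kb : ℝ) * Ms + (Kc : ℝ) * Mr + (Kp : ℝ) +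
      (Kd : ℝ) * Ms + (Ke : ℝ) * Mr + (Kq : ℝ), by positivity, ?_⟩
    intro x hx1 hx2 x' hx1' hx2' z hz
    have lb : |b j x - b j x'| ≤ (Kb : ℝ) * |x - x'| := by
      have := hKb.dist_le_mul x ⟨hx1, hx2⟩ x' ⟨hx1', hx2'⟩
      rwa [Real.dist_eq, Real.dist_eq] at this
    have lc : |c j x - c j x'| ≤ (Kc : ℝ) * |x - x'| := by
      have := hKc'.dist_le_mul x ⟨hx1, hx2⟩ x' ⟨hx1', hx2'⟩
      rwa [Real.dist_eq, Real.dist_eq] at this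
    have ld : |d j x - d j x'| ≤ (Kd : ℝ) * |x - x'| := by
      have := hKd.dist_le_mul x ⟨hx1, hx2⟩ x' ⟨hx1', hx2'⟩
      rwa [Real.dist_eq, Real.dist_eq] at this
    have le' : |e j x - e j x'| ≤ (Ke : ℝ) * |x - x'| := by
      have := hKe.dist_le_mul x ⟨hx1, hx2⟩ x' ⟨hx1', hx2'⟩
      rwa [Real.dist_eq, Real.dist_eq] at this
    have lp : |p j x - p j x'| ≤ (Kp : ℝ) * |x - x'| := by
      have := hKp.dist_le_mul x ⟨hx1, hx2⟩ x' ⟨hx1', hx2'⟩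
      rwa [Real.dist_eq, Real.dist_eq] at this
    have lq : |q j x - q j x'| ≤ (Kq : ℝ) * |x - x'| := by
      have := hKq.dist_le_mul x ⟨hx1, hx2⟩ x' ⟨hx1', hx2'⟩
      rwa [Real.dist_eq, Real.dist_eq] at this
    rw [hF, hF]
    unfold nd1
    simp only []
    have e1 : (b j x * s j z.1 + c j x * r j z.2 + p j x) -
        (b j x' * s j z.1 + c j x' * r j z.2 + p j x') =
        (b j x - b j x') * s j z.1 + (c j x - c j x') * r j z.2 + (p j x - p j x') := by ring
    have e2 : (d j x * s j z.1 + e j x * r j z.2 + q j x) -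
        (d j x' * s j z.1 + e j x' * r j z.2 + q j x') =
        (d j x - d j x') * s j z.1 + (e j x - e j x') * r j z.2 + (q j x - q j x') := by ring
    rw [e1, e2]
    have t1 : |(b j x - b j x') * s j z.1 + (c j x - c j x') * r j z.2 + (p j x - p j x')| ≤
        |b j x - b j x'| * |s j z.1| + |c j x - c j x'| * |r j z.2| + |p j x - p j x'| := by
      refine (abs_add_le _ _).trans (add_le_add_left ((abs_add_le _ _).trans ?_) _)
      rw [abs_mul, abs_mul]
    have t2 : |(d j x - d j x') * s j z.1 + (e j x - e j x') * r j z.2 + (q j x - q j x')| ≤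
        |d j x - d j x'| * |s j z.1| + |e j x - e j x'| * |r j z.2| + |q j x - q j x'| := by
      refine (abs_add_le _ _).trans (add_le_add_left ((abs_add_le _ _).trans ?_) _)
      rw [abs_mul, abs_mul]
    have q1 : |b j x - b j x'| * |s j z.1| ≤ ((Kb : ℝ) * |x - x'|) * Ms :=
      mul_le_mul lb (hMs z hz) (abs_nonneg _) (by positivity)
    have q2 : |c j x - c j x'| * |r j z.2| ≤ ((Kc : ℝ) * |x - x'|) * Mr :=
      mul_le_mul lc (hMr z hz) (abs_nonneg _) (by positivity)
    have q3 : |d j x - d j x'| * |s j z.1| ≤ ((Kd : ℝ) * |x - x'|) * Ms :=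
      mul_le_mul ld (hMs z hz) (abs_nonneg _) (by positivity)
    have q4 : |e j x - e j x'| * |r j z.2| ≤ ((Ke : ℝ) * |x - x'|) * Mr :=
      mul_le_mul le' (hMr z hz) (abs_nonneg _) (by positivity)
    have heq' : ((Kb : ℝ) * Ms + (Kc : ℝ) * Mr + (Kp : ℝ) +
        (Kd : ℝ) * Ms + (Ke : ℝ) * Mr + (Kq : ℝ)) * |x - x'| =
        ((Kb : ℝ) * |x - x'|) * Ms + ((Kc : ℝ) * |x - x'|) * Mr + (Kp : ℝ) * |x - x'| +
        ((Kd : ℝ) * |x - x'|) * Ms + ((Ke : ℝ) * |x - x'|) * Mr + (Kq : ℝ) * |x - x'| := by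
      ring
    rw [heq']
    linarith
  -- continuity estimate
  have hcont : ∀ ε' : ℝ, 0 < ε' → ∀ y : ℝ, t 0 ≤ y → y ≤ t N →
      ∃ δ : ℝ, 0 < δ ∧ ∀ z : ℝ, t 0 ≤ z → z ≤ t N → |z - y| ≤ δ →
        nd1 (f z) (f y) ≤ ε' := by
    intro ε' hε'
    have hε1p : (0:ℝ) < ε' / 8 := by linarith
    obtain ⟨Λ, hΛ0, hΛ1, hΛc⟩ := hLAM (ε' / 8) hε1p
    have hone : (0:ℝ) < 1 - Λ := by linarith
    set ε1 : ℝ := ε' / 8 with hε1def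
    set ε2 : ℝ := ε' * (1 - Λ) / 8 with hε2def
    have hε2p : 0 < ε2 := by rw [hε2def]; positivity
    have hCLex : ∀ j : ℕ, ∃ CL : ℝ, 0 ≤ CL ∧ (1 ≤ j → j ≤ N →
        ∀ x : ℝ, t 0 ≤ x → x ≤ t N → ∀ x' : ℝ, t 0 ≤ x' → x' ≤ t N → ∀ z ∈ K,
          nd1 (F j x z) (F j x' z) ≤ CL * |x - x'|) := by
      intro j
      by_cases hj : 1 ≤ j ∧ j ≤ N
      · obtain ⟨CL, hCL0, hCL⟩ := hlipx j hj.1 hj.2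
        exact ⟨CL, hCL0, fun _ _ => hCL⟩
      · exact ⟨0, le_refl 0, fun h1 h2 => absurd ⟨h1, h2⟩ hj⟩
    choose CLf hCL0 hCLP using hCLex
    have key : ∀ k : ℕ, ∀ y : ℝ, t 0 ≤ y → y ≤ t N → ∃ δ : ℝ, 0 < δ ∧
        ∀ z : ℝ, t 0 ≤ z → z ≤ t N → |z - y| ≤ δ →
          nd1 (f z) (f y) ≤ Λ ^ k * M + 2 * ε1 + ε2 / (1 - Λ) := by
      intro k
      induction k with
      | zero =>
        intro y hy1 hy2
        refine ⟨1, one_pos, fun z hz1 hz2 _ => ?_⟩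
        have h1 := hM _ (hfK z) _ (hfK y)
        have h2 : 0 < ε2 / (1 - Λ) := div_pos hε2p hone
        rw [pow_zero, one_mul]
        rw [hε1def]
        linarith
      | succ k ih =>
        intro y hy1 hy2
        have ihC : ∀ x : ℝ, ∃ δ : ℝ, 0 < δ ∧ (t 0 ≤ x → x ≤ t N →
            ∀ z : ℝ, t 0 ≤ z → z ≤ t N → |z - x| ≤ δ →
              nd1 (f z) (f x) ≤ Λ ^ k * M + 2 * ε1 + ε2 / (1 - Λ)) := by
          intro x
          by_cases hx : t 0 ≤ x ∧ x ≤ t N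
          · obtain ⟨δ, hδ, hP⟩ := ih x hx.1 hx.2
            exact ⟨δ, hδ, fun _ _ => hP⟩
          · exact ⟨1, one_pos, fun h1 h2 => absurd ⟨h1, h2⟩ hx⟩
        choose Df hDp hD using ihC
        obtain ⟨δ0, hδ0p, hδ0⟩ : ∃ δ0 : ℝ, 0 < δ0 ∧
            ∀ kk, kk ≤ N → t kk ≠ y → δ0 ≤ |t kk - y| := by
          refine ⟨(Finset.range (N+1)).inf' (Finset.nonempty_range_iff.mpr (by omega))
            (fun kk => if t kk = y then 1 else |t kk - y|), ?_, ?_⟩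
          · rw [Finset.lt_inf'_iff]
            intro kk _
            split_ifs with h
            · exact one_pos
            · exact abs_pos.mpr (sub_ne_zero.mpr h)
          · intro kk hkk hne
            refine le_trans (Finset.inf'_le (fun kk => if t kk = y then 1 else |t kk - y|)
              (Finset.mem_range.mpr (show kk < N + 1 by omega))) ?_
            rw [if_neg hne]
        set δ := min (δ0 / 2) ((Finset.Icc 1 N).inf'
            (Finset.nonempty_Icc.mpr hN)
            (fun j => a j * min (Df ((y - fc j) / a j)) (ε2 / (CLf j + 1)))) with hδdef
        have hδle0 : δ ≤ δ0 / 2 := by rw [hδdef]; exact min_le_left _ _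
        have hδp : 0 < δ := by
          rw [hδdef]
          refine lt_min (by linarith) ?_
          rw [Finset.lt_inf'_iff]
          intro j hj
          rw [Finset.mem_Icc] at hj
          have hap := apos j hj.1 hj.2
          have hmp : 0 < min (Df ((y - fc j) / a j)) (ε2 / (CLf j + 1)) :=
            lt_min (hDp _) (div_pos hε2p (by linarith [hCL0 j]))
          exact mul_pos hap hmp
        refine ⟨δ, hδp, ?_⟩
        intro z hz1 hz2 hzy
        obtain ⟨j, hj1, hjN, hzj1, hzj2⟩ := hex N hN (le_refl N) z hz1 hz2
        have hyj1 : t (j - 1) ≤ y := by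
          by_contra hcon
          push_neg at hcon
          have hd0 := hδ0 (j - 1) (by omega) (ne_of_gt hcon)
          have habs : |t (j - 1) - y| = t (j - 1) - y := abs_of_pos (by linarith)
          have h2 : z - y ≤ |z - y| := le_abs_self _
          rw [habs] at hd0
          linarith
        have hyj2 : y ≤ t j := by
          by_contra hcon
          push_neg at hcon
          have hd0 := hδ0 j (by omega) (ne_of_lt hcon)
          have habs : |t j - y| = -(t j - y) := abs_of_neg (by linarith)
          have h2 : y - z ≤ |z - y| := by rw [abs_sub_comm]; exact le_abs_self _
          rw [habs] at hd0
          linarith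
        have hap := apos j hj1 hjN
        obtain ⟨hx1, hx2, hxe⟩ := hax j hj1 hjN y hyj1 hyj2
        obtain ⟨hx1', hx2', hxe'⟩ := hax j hj1 hjN z hzj1 hzj2
        set x : ℝ := (y - fc j) / a j with hxdef
        set x' : ℝ := (z - fc j) / a j with hx'def
        have hfy : f y = F j x (f x) := by
          have hfe := feq j hj1 hjN x hx1 hx2
          rw [hL j hj1 hjN, hxe] at hfe
          exact hfe
        have hfz : f z = F j x' (f x') := by
          have hfe := feq j hj1 hjN x' hx1' hx2'
          rw [hL j hj1 hjN, hxe'] at hfe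
          exact hfe
        have hdx : |x' - x| = |z - y| / a j := by
          have h1 : x' - x = (z - y) / a j := by
            rw [hx'def, hxdef, div_sub_div_same]
            ring_nf
          rw [h1, abs_div, abs_of_pos hap]
        have hdle : |x' - x| ≤ min (Df x) (ε2 / (CLf j + 1)) := by
          have hin : δ ≤ a j * min (Df x) (ε2 / (CLf j + 1)) := by
            rw [hδdef, hxdef]
            exact le_trans (min_le_right _ _)
              (Finset.inf'_le _ (Finset.mem_Icc.mpr ⟨hj1, hjN⟩))
          rw [hdx, div_le_iff₀ hap]
          have hin' : δ ≤ min (Df x) (ε2 / (CLf j + 1)) * a j := by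
            rw [mul_comm] at hin; exact hin
          linarith
        have hb2 : nd1 (f x') (f x) ≤ Λ ^ k * M + 2 * ε1 + ε2 / (1 - Λ) :=
          hD x hx1 hx2 x' hx1' hx2' (le_trans hdle (min_le_left _ _))
        have hb1 : CLf j * |x' - x| ≤ ε2 := by
          have h3 : (0:ℝ) < CLf j + 1 := by linarith [hCL0 j]
          have h1 : CLf j * |x' - x| ≤ CLf j * (ε2 / (CLf j + 1)) :=
            mul_le_mul_of_nonneg_left (le_trans hdle (min_le_right _ _)) (hCL0 j)
          have h4 : CLf j / (CLf j + 1) ≤ 1 := (div_le_one h3).mpr (by linarith)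
          have h2 : CLf j * (ε2 / (CLf j + 1)) ≤ ε2 := by
            calc CLf j * (ε2 / (CLf j + 1)) = ε2 * (CLf j / (CLf j + 1)) := by ring
              _ ≤ ε2 * 1 := mul_le_mul_of_nonneg_left h4 hε2p.le
              _ = ε2 := mul_one _
          linarith
        calc nd1 (f z) (f y) = nd1 (F j x' (f x')) (F j x (f x)) := by rw [hfz, hfy]
          _ ≤ nd1 (F j x' (f x')) (F j x (f x')) + nd1 (F j x (f x')) (F j x (f x)) :=
              nd1_triangle _ _ _
          _ ≤ CLf j * |x' - x| +
              (Λ * nd1 (f x') (f x) + (1 - Λ) * (2 * ε1)) := by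
              refine add_le_add (hCLP j hj1 hjN x' hx1' hx2' x hx1 hx2 (f x') (hfK x')) ?_
              rw [hε1def]
              exact hΛc j hj1 hjN x hx1 hx2 (f x') (hfK x') (f x) (hfK x)
          _ ≤ ε2 + (Λ * (Λ ^ k * M + 2 * ε1 + ε2 / (1 - Λ)) + (1 - Λ) * (2 * ε1)) := by
              have hmul := mul_le_mul_of_nonneg_left hb2 hΛ0
              linarith
          _ = Λ ^ (k + 1) * M + 2 * ε1 + ε2 / (1 - Λ) := by
              rw [pow_succ]
              have hfe : ε2 + Λ * (ε2 / (1 - Λ)) = ε2 / (1 - Λ) := by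
                rw [eq_div_iff (ne_of_gt hone)]
                field_simp
                ring
              field_simp
              ring
    intro y hy1 hy2
    obtain ⟨k, hk⟩ : ∃ k : ℕ, Λ ^ k * M < ε' / 2 := by
      have htend := (tendsto_pow_atTop_nhds_zero_of_lt_one hΛ0 hΛ1).mul_const M
      rw [zero_mul] at htend
      exact (htend.eventually_lt_const (by linarith : (0:ℝ) < ε' / 2)).exists
    obtain ⟨δ, hδp, hδP⟩ := key k y hy1 hy2
    refine ⟨δ, hδp, fun z h1 h2 h3 => le_trans (hδP z h1 h2 h3) ?_⟩
    have he2 : ε2 / (1 - Λ) = ε' * (1 - Λ) / 8 / (1 - Λ) := by rw [hε2def]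
    have he3 : ε2 / (1 - Λ) = ε' / 8 := by
      rw [he2]
      field_simp
    rw [hε1def, he3]
    linarith
  -- assemble the conclusion
  refine ⟨f, ?_, ?_, fknot⟩
  · rw [Metric.continuousOn_iff]
    intro y hy ε hε
    obtain ⟨δ, hδp, hδP⟩ := hcont (ε / 2) (by linarith) y hy.1 hy.2
    refine ⟨δ, hδp, fun z hz hdist => ?_⟩
    rw [Real.dist_eq] at hdist
    have h1 := hδP z hz.1 hz.2 (le_of_lt hdist)
    calc dist (f z) (f y) ≤ nd1 (f z) (f y) := dist_le_nd1 _ _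
      _ ≤ ε / 2 := h1
      _ < ε := by linarith
  · intro j hj1 hjN x hx
    exact feq j hj1 hjN x hx.1 hx.2
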